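/- For every ε > 0 there exists D such that for all integers d ≥ D: sup_{t∈ℝ} | σ̃_0((−∞,t]) − σ_sc((−∞,t]) | ≤ (1+ε) · 2/(π·d), where σ̃_0 is the rescaled Kesten–McKay measure of degree d and σ_sc is the semicircle measure. -/

import Mathlib

open MeasureTheory Filter

noncomputable section

/-- The density of the Kesten–McKay measure of degree `d`. -/
def kmDensity (d : ℕ) (l : ℝ) : ℝ :=
  if l ^ 2 < 4 * ((d : ℝ) - 1) then
    ((d : ℝ) / (2 * Real.pi)) * Real.sqrt (4 * ((d : ℝ) - 1) - l ^ 2) / ((d : ℝ) ^ 2 - l ^ 2)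
  else 0

/-- The cumulative distribution function `σ₀((-∞, t])` of the Kesten–McKay measure. -/
def kmCDF (d : ℕ) (t : ℝ) : ℝ := ∫ l in Set.Iic t, kmDensity d l

/-- The Kesten–McKay measure of degree `d`. -/
def kmMeasure (d : ℕ) : Measure ℝ :=
  MeasureTheory.volume.withDensity fun l => ENNReal.ofReal (kmDensity d l)

/-- The bound `γ_d` on the density of the Kesten–McKay measure. -/
def gammaD (d : ℕ) : ℝ :=
  if d ≤ 6 then (d : ℝ) / (4 * Real.pi * Real.sqrt ((d : ℝ) ^ 2 - 4 * ((d : ℝ) - 1)))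
  else Real.sqrt ((d : ℝ) - 1) / ((d : ℝ) * Real.pi)

/-- The density of the rescaled Kesten–McKay measure of degree `d`. -/
def kmrDensity (d : ℕ) (l : ℝ) : ℝ :=
  if l ^ 2 < 1 then
    (2 / Real.pi) * (((d : ℝ) * ((d : ℝ) - 1)) / ((d : ℝ) ^ 2 - 4 * ((d : ℝ) - 1) * l ^ 2)) *
      Real.sqrt (1 - l ^ 2)
  else 0

/-- The CDF of the rescaled Kesten–McKay measure. -/
def kmrCDF (d : ℕ) (t : ℝ) : ℝ := ∫ l in Set.Iic t, kmrDensity d l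

/-- The density of the semicircle measure. -/
def scDensity (l : ℝ) : ℝ := if l ^ 2 < 1 then (2 / Real.pi) * Real.sqrt (1 - l ^ 2) else 0

/-- The CDF of the semicircle measure. -/
def scCDF (t : ℝ) : ℝ := ∫ l in Set.Iic t, scDensity l

/-- The semicircle measure. -/
def scMeasure : Measure ℝ :=
  MeasureTheory.volume.withDensity fun l => ENNReal.ofReal (scDensity l)

/-- The bound `γ̃_d` on the density of the rescaled Kesten–McKay measure. -/
def gammaTilde (d : ℕ) : ℝ :=
  if d ≤ 6 then
    (d : ℝ) * Real.sqrt ((d : ℝ) - 1) /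
      (2 * Real.pi * Real.sqrt ((d : ℝ) ^ 2 - 4 * ((d : ℝ) - 1)))
  else 2 * ((d : ℝ) - 1) / (Real.pi * (d : ℝ))

/-- The Stieltjes transform `Γ_{𝒯_d}(z) = ∫ (λ - z)⁻¹ σ₀(dλ)` of the Kesten–McKay measure. -/
def kmStieltjes (d : ℕ) (z : ℂ) : ℂ := ∫ l : ℝ, ((l : ℂ) - z)⁻¹ ∂(kmMeasure d)

/-- The Stieltjes transform `Γ_sc(z) = ∫ (λ - z)⁻¹ σ_sc(dλ)` of the semicircle measure. -/
def scStieltjes (z : ℂ) : ℂ := ∫ l : ℝ, ((l : ℂ) - z)⁻¹ ∂scMeasure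


open Real intervalIntegral

private lemma int_sin_sq_cos_sq' : ∫ x in (-(π/2))..(π/2), Real.sin x ^ 2 * Real.cos x ^ 2 = π/8 := by
  rw [integral_sin_sq_mul_cos_sq]
  norm_num [Real.sin_two_pi, show 4 * (π/2) = 2*π by ring, show 4 * (-(π/2)) = -(2*π) by ring]

private lemma int_sin4_cos_sq' : ∫ x in (-(π/2))..(π/2), Real.sin x ^ 4 * Real.cos x ^ 2 = π/16 := by
  have h := @integral_sin_pow_even_mul_cos_pow_even (-(π/2)) (π/2) 2 1
  norm_num at h
  rw [h]
  have e : ∀ x : ℝ, ((1 - Real.cos (2*x)) / 2) ^ 2 * ((1 + Real.cos (2*x)) / 2) =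
      (1 - Real.cos (2*x) - (Real.cos (2*x))^2 + (Real.cos (2*x))^3) / 8 := by
    intro x; ring
  rw [intervalIntegral.integral_congr (fun x _ => e x)]
  have h1 : ∫ x in (-(π/2))..(π/2), Real.cos (2*x) = 0 := by
    rw [intervalIntegral.integral_comp_mul_left (fun x => Real.cos x) (two_ne_zero)]
    norm_num [show 2 * (π/2) = π by ring, show 2 * (-(π/2)) = -π by ring]; try ring
  have h2 : ∫ x in (-(π/2))..(π/2), (Real.cos (2*x))^2 = π/2 := by
    rw [intervalIntegral.integral_comp_mul_left (fun x => Real.cos x ^ 2) (two_ne_zero)]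
    norm_num [integral_cos_sq, Real.sin_pi, show 2 * (π/2) = π by ring,
      show 2 * (-(π/2)) = -π by ring]; try ring
  have h3 : ∫ x in (-(π/2))..(π/2), (Real.cos (2*x))^3 = 0 := by
    rw [intervalIntegral.integral_comp_mul_left (fun x => Real.cos x ^ 3) (two_ne_zero)]
    norm_num [integral_cos_pow_three, show 2 * (π/2) = π by ring,
      show 2 * (-(π/2)) = -π by ring]; try ring
  have c1 : IntervalIntegrable (fun x => Real.cos (2*x)) volume (-(π/2)) (π/2) :=
    (Continuous.intervalIntegrable (by fun_prop) _ _)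
  have c2 : IntervalIntegrable (fun x => (Real.cos (2*x))^2) volume (-(π/2)) (π/2) :=
    (Continuous.intervalIntegrable (by fun_prop) _ _)
  have c3 : IntervalIntegrable (fun x => (Real.cos (2*x))^3) volume (-(π/2)) (π/2) :=
    (Continuous.intervalIntegrable (by fun_prop) _ _)
  rw [intervalIntegral.integral_div,
    intervalIntegral.integral_add ((intervalIntegrable_const.sub c1).sub c2) c3,
    intervalIntegral.integral_sub (intervalIntegrable_const.sub c1) c2,
    intervalIntegral.integral_sub intervalIntegrable_const c1,
    intervalIntegral.integral_const, h1, h2, h3]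
  simp; ring

private lemma int_pow_sqrt' (k : ℕ) :
    ∫ x in (-1:ℝ)..1, x^k * Real.sqrt (1 - x^2)
      = ∫ x in (-(π/2))..(π/2), Real.sin x ^ k * Real.cos x ^ 2 := by
  calc ∫ x in (-1:ℝ)..1, x^k * Real.sqrt (1 - x^2)
      = ∫ x in Real.sin (-(π/2)).. Real.sin (π/2), x^k * Real.sqrt (1 - x^2) := by
        rw [Real.sin_neg, Real.sin_pi_div_two]
    _ = ∫ x in (-(π/2))..(π/2), (Real.sin x ^ k * Real.sqrt (1 - Real.sin x ^2)) * Real.cos x :=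
        (integral_comp_mul_deriv (fun x _ => Real.hasDerivAt_sin x) Real.continuousOn_cos
          (by fun_prop)).symm
    _ = ∫ x in (-(π/2))..(π/2), Real.sin x ^ k * Real.cos x ^ 2 := by
        refine integral_congr_ae (MeasureTheory.ae_of_all _ fun x h => ?_)
        rw [Set.uIoc_of_le (neg_le_self (le_of_lt (half_pos Real.pi_pos))), Set.mem_Ioc] at h
        rw [← Real.cos_eq_sqrt_one_sub_sin_sq (le_of_lt h.1) h.2, pow_two]
        ring

private lemma int_sq_sqrt' : ∫ x in (-1:ℝ)..1, x^2 * Real.sqrt (1 - x^2) = π/8 := by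
  rw [int_pow_sqrt' 2, int_sin_sq_cos_sq']

private lemma int_pow4_sqrt' : ∫ x in (-1:ℝ)..1, x^4 * Real.sqrt (1 - x^2) = π/16 := by
  rw [int_pow_sqrt' 4, int_sin4_cos_sq']

private lemma int_sqrt' : ∫ x in (-1:ℝ)..1, Real.sqrt (1 - x^2) = π/2 :=
  integral_sqrt_one_sub_sq

private lemma int_qpoly_sqrt' :
    ∫ x in (-1:ℝ)..1, (1/2 - x^2)^2 * Real.sqrt (1 - x^2) = π/16 := by
  have e : ∀ x : ℝ, (1/2 - x^2)^2 * Real.sqrt (1 - x^2) =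
      (1/4) * Real.sqrt (1 - x^2) - x^2 * Real.sqrt (1 - x^2) + x^4 * Real.sqrt (1 - x^2) := by
    intro x; ring
  rw [intervalIntegral.integral_congr (fun x _ => e x)]
  have c0 : IntervalIntegrable (fun x : ℝ => (1/4) * Real.sqrt (1 - x^2)) volume (-1) 1 :=
    (Continuous.intervalIntegrable (by fun_prop) _ _)
  have c2 : IntervalIntegrable (fun x : ℝ => x^2 * Real.sqrt (1 - x^2)) volume (-1) 1 :=
    (Continuous.intervalIntegrable (by fun_prop) _ _)
  have c4 : IntervalIntegrable (fun x : ℝ => x^4 * Real.sqrt (1 - x^2)) volume (-1) 1 :=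
    (Continuous.intervalIntegrable (by fun_prop) _ _)
  rw [intervalIntegral.integral_add (c0.sub c2) c4, intervalIntegral.integral_sub c0 c2,
    intervalIntegral.integral_const_mul, int_sqrt', int_sq_sqrt', int_pow4_sqrt']
  ring

private def pin' (c l : ℝ) : ℝ :=
  (2/Real.pi) * (4*(c-1)/(c-2)^2) * (l^4 * Real.sqrt (1 - l^2))

private def qin' (c l : ℝ) : ℝ :=
  (2/Real.pi) * (4*(c-1)/(c-2)^2) * ((1/2 - l^2)^2 * Real.sqrt (1 - l^2))
    + (2/Real.pi) * (1/(c-2)^2) * Real.sqrt (1 - l^2)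

private lemma memIoo_iff' (l : ℝ) : l ∈ Set.Ioo (-1:ℝ) 1 ↔ l^2 < 1 := by
  rw [Set.mem_Ioo, ← abs_lt, ← sq_lt_one_iff_abs_lt_one]

private lemma integrable_ind' {F : ℝ → ℝ} (hF : ContinuousOn F (Set.Icc (-1:ℝ) 1)) :
    Integrable ((Set.Ioo (-1:ℝ) 1).indicator F) := by
  rw [integrable_indicator_iff measurableSet_Ioo]
  exact (hF.integrableOn_compact isCompact_Icc).mono_set Set.Ioo_subset_Icc_self

private lemma int_ind' (F : ℝ → ℝ) :
    ∫ l, (Set.Ioo (-1:ℝ) 1).indicator F l = ∫ l in (-1:ℝ)..1, F l := by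
  rw [MeasureTheory.integral_indicator measurableSet_Ioo,
    ← MeasureTheory.integral_Ioc_eq_integral_Ioo,
    ← intervalIntegral.integral_of_le (by norm_num : (-1:ℝ) ≤ 1)]

private lemma kmr_eq_ind (d : ℕ) : kmrDensity d = (Set.Ioo (-1:ℝ) 1).indicator
    (fun l => (2/Real.pi) * (((d:ℝ) * ((d:ℝ) - 1)) / ((d:ℝ)^2 - 4*((d:ℝ)-1)*l^2)) *
      Real.sqrt (1 - l^2)) := by
  funext l
  by_cases h : l^2 < 1
  · rw [kmrDensity, if_pos h, Set.indicator_of_mem ((memIoo_iff' l).2 h)]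
  · rw [kmrDensity, if_neg h, Set.indicator_of_notMem (fun hm => h ((memIoo_iff' l).1 hm))]

private lemma sc_eq_ind : scDensity = (Set.Ioo (-1:ℝ) 1).indicator
    (fun l => (2/Real.pi) * Real.sqrt (1 - l^2)) := by
  funext l
  by_cases h : l^2 < 1
  · rw [scDensity, if_pos h, Set.indicator_of_mem ((memIoo_iff' l).2 h)]
  · rw [scDensity, if_neg h, Set.indicator_of_notMem (fun hm => h ((memIoo_iff' l).1 hm))]

private lemma kmr_integrable (d : ℕ) (hd : (30:ℝ) ≤ (d:ℝ)) : Integrable (kmrDensity d) := by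
  rw [kmr_eq_ind d]
  apply integrable_ind'
  apply ContinuousOn.mul
  · apply ContinuousOn.mul continuousOn_const
    apply ContinuousOn.div continuousOn_const (by fun_prop)
    intro l hl
    have h1 : l^2 ≤ 1 := by nlinarith [hl.1, hl.2]
    nlinarith
  · exact (Continuous.continuousOn (by fun_prop))

private lemma sc_integrable : Integrable scDensity := by
  rw [sc_eq_ind]
  exact integrable_ind' (Continuous.continuousOn (by fun_prop))

private lemma pin_integrable (c : ℝ) :
    Integrable ((Set.Ioo (-1:ℝ) 1).indicator (pin' c)) :=
  integrable_ind' (Continuous.continuousOn (by unfold pin'; fun_prop))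

private lemma qin_integrable (c : ℝ) :
    Integrable ((Set.Ioo (-1:ℝ) 1).indicator (qin' c)) :=
  integrable_ind' (Continuous.continuousOn (by unfold qin'; fun_prop))

private lemma pin_nonneg {c : ℝ} (hc : (30:ℝ) ≤ c) (l : ℝ) : 0 ≤ pin' c l := by
  unfold pin'
  have := Real.sqrt_nonneg (1 - l^2)
  have h1 : (0:ℝ) ≤ 4*(c-1)/(c-2)^2 := by
    apply div_nonneg (by linarith) (sq_nonneg _)
  have h2 : (0:ℝ) ≤ 2/Real.pi := by positivity
  positivity

private lemma qin_nonneg {c : ℝ} (hc : (30:ℝ) ≤ c) (l : ℝ) : 0 ≤ qin' c l := by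
  unfold qin'
  have := Real.sqrt_nonneg (1 - l^2)
  have h1 : (0:ℝ) ≤ 4*(c-1)/(c-2)^2 := div_nonneg (by linarith) (sq_nonneg _)
  have h2 : (0:ℝ) ≤ 1/(c-2)^2 := by positivity
  have h3 : (0:ℝ) ≤ 2/Real.pi := by positivity
  have h4 : (0:ℝ) ≤ (1/2 - l^2)^2 := sq_nonneg _
  apply add_nonneg
  · apply mul_nonneg (mul_nonneg h3 h1) (mul_nonneg h4 this)
  · apply mul_nonneg (mul_nonneg h3 h2) this

private lemma integral_pin {c : ℝ} (hc : (30:ℝ) ≤ c) :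
    ∫ l, (Set.Ioo (-1:ℝ) 1).indicator (pin' c) l = (c-1)/(2*(c-2)^2) := by
  rw [int_ind', show pin' c = fun l => ((2/Real.pi) * (4*(c-1)/(c-2)^2)) *
      (l^4 * Real.sqrt (1 - l^2)) from funext fun l => by unfold pin'; ring,
    intervalIntegral.integral_const_mul, int_pow4_sqrt']
  have hπ : Real.pi ≠ 0 := Real.pi_ne_zero
  have h2 : ((c:ℝ)-2)^2 ≠ 0 := by nlinarith
  field_simp
  ring

private lemma integral_qin {c : ℝ} (hc : (30:ℝ) ≤ c) :
    ∫ l, (Set.Ioo (-1:ℝ) 1).indicator (qin' c) l = (c+1)/(2*(c-2)^2) := by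
  rw [int_ind']
  have c1 : IntervalIntegrable (fun l : ℝ => (2/Real.pi) * (4*(c-1)/(c-2)^2) *
      ((1/2 - l^2)^2 * Real.sqrt (1 - l^2))) volume (-1) 1 :=
    (Continuous.intervalIntegrable (by fun_prop) _ _)
  have c2 : IntervalIntegrable (fun l : ℝ => (2/Real.pi) * (1/(c-2)^2) *
      Real.sqrt (1 - l^2)) volume (-1) 1 :=
    (Continuous.intervalIntegrable (by fun_prop) _ _)
  rw [show (fun l => qin' c l) = (fun l : ℝ => (2/Real.pi) * (4*(c-1)/(c-2)^2) *
      ((1/2 - l^2)^2 * Real.sqrt (1 - l^2)) + (2/Real.pi) * (1/(c-2)^2) *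
      Real.sqrt (1 - l^2)) from rfl,
    intervalIntegral.integral_add c1 c2, intervalIntegral.integral_const_mul,
    intervalIntegral.integral_const_mul, int_qpoly_sqrt', integral_sqrt_one_sub_sq]
  have hπ : Real.pi ≠ 0 := Real.pi_ne_zero
  have h2 : ((c:ℝ)-2)^2 ≠ 0 := by nlinarith
  field_simp
  ring

private lemma bound_upper (d : ℕ) (hd : (30:ℝ) ≤ (d:ℝ)) (l : ℝ) :
    kmrDensity d l - scDensity l ≤ (Set.Ioo (-1:ℝ) 1).indicator (pin' (d:ℝ)) l := by
  set c : ℝ := (d:ℝ) with hcdef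
  by_cases h : l^2 < 1
  · rw [kmrDensity, scDensity, if_pos h, if_pos h,
      Set.indicator_of_mem ((memIoo_iff' l).2 h)]
    have hs : 0 ≤ Real.sqrt (1 - l^2) := Real.sqrt_nonneg _
    have hD : 0 < c^2 - 4*(c-1)*l^2 := by nlinarith
    have h2 : (0:ℝ) < (c-2)^2 := by nlinarith
    have key : (c*(c-1) - (c^2 - 4*(c-1)*l^2)) * (c-2)^2
        ≤ (4*(c-1)*l^4) * (c^2 - 4*(c-1)*l^2) := by
      have f1 : (0:ℝ) ≤ (4*(c-1)*l^4) * (4*(c-1)*(1-l^2)) :=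
        mul_nonneg (by nlinarith [sq_nonneg (l^2)]) (by nlinarith)
      have f2 : (0:ℝ) ≤ (4*(c-1)*l^4 - (4*(c-1)*l^2 - c)) * (c-2)^2 :=
        mul_nonneg (by nlinarith [sq_nonneg (l^2 - 1/2)]) (le_of_lt h2)
      nlinarith [f1, f2]
    have key2 : c*(c-1)/(c^2 - 4*(c-1)*l^2) - 1 ≤ 4*(c-1)/(c-2)^2 * l^4 := by
      rw [div_sub_one hD.ne',
        show 4*(c-1)/(c-2)^2 * l^4 = (4*(c-1)*l^4)/((c-2)^2) by ring,
        div_le_div_iff₀ hD h2]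
      exact key
    have hfac : (0:ℝ) ≤ (2/Real.pi) * Real.sqrt (1 - l^2) := by positivity
    calc 2/Real.pi * (c*(c-1)/(c^2 - 4*(c-1)*l^2)) * Real.sqrt (1-l^2)
          - 2/Real.pi * Real.sqrt (1-l^2)
        = ((2/Real.pi) * Real.sqrt (1-l^2)) * (c*(c-1)/(c^2 - 4*(c-1)*l^2) - 1) := by ring
      _ ≤ ((2/Real.pi) * Real.sqrt (1-l^2)) * (4*(c-1)/(c-2)^2 * l^4) :=
          mul_le_mul_of_nonneg_left key2 hfac
      _ = pin' c l := by unfold pin'; ring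
  · rw [kmrDensity, scDensity, if_neg h, if_neg h,
      Set.indicator_of_notMem (fun hm => h ((memIoo_iff' l).1 hm))]
    norm_num

private lemma bound_lower (d : ℕ) (hd : (30:ℝ) ≤ (d:ℝ)) (l : ℝ) :
    scDensity l - kmrDensity d l ≤ (Set.Ioo (-1:ℝ) 1).indicator (qin' (d:ℝ)) l := by
  set c : ℝ := (d:ℝ) with hcdef
  by_cases h : l^2 < 1
  · rw [kmrDensity, scDensity, if_pos h, if_pos h,
      Set.indicator_of_mem ((memIoo_iff' l).2 h)]
    have hs : 0 ≤ Real.sqrt (1 - l^2) := Real.sqrt_nonneg _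
    have hD : 0 < c^2 - 4*(c-1)*l^2 := by nlinarith
    have h2 : (0:ℝ) < (c-2)^2 := by nlinarith
    have key : ((c^2 - 4*(c-1)*l^2) - c*(c-1)) * (c-2)^2
        ≤ (4*(c-1)*(1/2-l^2)^2 + 1) * (c^2 - 4*(c-1)*l^2) := by
      have f1 : (0:ℝ) ≤ (4*(c-1)*(1/2-l^2)^2 + 1) * (4*(c-1)*(1-l^2)) :=
        mul_nonneg (by nlinarith [sq_nonneg (1/2 - l^2)]) (by nlinarith)
      have f2 : (0:ℝ) ≤ ((4*(c-1)*(1/2-l^2)^2 + 1) - ((c^2 - 4*(c-1)*l^2) - c*(c-1))) * (c-2)^2 :=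
        mul_nonneg (by nlinarith [sq_nonneg (l^2)]) (le_of_lt h2)
      nlinarith [f1, f2]
    have key2 : 1 - c*(c-1)/(c^2 - 4*(c-1)*l^2)
        ≤ (4*(c-1)*(1/2-l^2)^2 + 1)/(c-2)^2 := by
      rw [show (1:ℝ) - c*(c-1)/(c^2 - 4*(c-1)*l^2)
          = ((c^2 - 4*(c-1)*l^2) - c*(c-1))/(c^2 - 4*(c-1)*l^2) by
            rw [sub_div, div_self hD.ne'],
        div_le_div_iff₀ hD h2]
      exact key
    have hfac : (0:ℝ) ≤ (2/Real.pi) * Real.sqrt (1 - l^2) := by positivity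
    calc 2/Real.pi * Real.sqrt (1-l^2)
          - 2/Real.pi * (c*(c-1)/(c^2 - 4*(c-1)*l^2)) * Real.sqrt (1-l^2)
        = ((2/Real.pi) * Real.sqrt (1-l^2)) * (1 - c*(c-1)/(c^2 - 4*(c-1)*l^2)) := by ring
      _ ≤ ((2/Real.pi) * Real.sqrt (1-l^2)) * ((4*(c-1)*(1/2-l^2)^2 + 1)/(c-2)^2) :=
          mul_le_mul_of_nonneg_left key2 hfac
      _ = qin' c l := by unfold qin'; ring
  · rw [kmrDensity, scDensity, if_neg h, if_neg h,
      Set.indicator_of_notMem (fun hm => h ((memIoo_iff' l).1 hm))]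
    norm_num


/-- For large degree `d`, the CDF of the rescaled Kesten–McKay measure is uniformly within
`(1+ε)·2/(πd)` of the semicircle CDF. -/
theorem stmt18 (ε : ℝ) (hε : 0 < ε) :
    ∃ D : ℕ, ∀ d : ℕ, D ≤ d → ∀ t : ℝ,
      |kmrCDF d t - scCDF t| ≤ (1 + ε) * (2 / (Real.pi * (d : ℝ))) := by
  refine ⟨30, fun d hd t => ?_⟩
  have hdr : (30:ℝ) ≤ (d:ℝ) := by exact_mod_cast hd
  set c : ℝ := (d:ℝ) with hcdef
  have hπ : (0:ℝ) < Real.pi := Real.pi_pos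
  have hπ315 : Real.pi < 3.15 := Real.pi_lt_d2
  have hIk : Integrable (kmrDensity d) := kmr_integrable d hdr
  have hIs : Integrable scDensity := sc_integrable
  have hIP := pin_integrable c
  have hIQ := qin_integrable c
  have hsplit : kmrCDF d t - scCDF t = ∫ l in Set.Iic t, (kmrDensity d l - scDensity l) := by
    rw [kmrCDF, scCDF]; exact (integral_sub hIk.restrict hIs.restrict).symm
  have hQval := integral_qin hdr
  have hPval := integral_pin hdr
  have hnum : (c+1)/(2*(c-2)^2) ≤ (1 + ε) * (2 / (Real.pi * c)) := by
    have step1 : (c+1)/(2*(c-2)^2) ≤ 2/(Real.pi*c) := by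
      rw [div_le_div_iff₀ (by nlinarith) (by nlinarith)]
      nlinarith [mul_le_mul_of_nonneg_right (le_of_lt hπ315)
        (by nlinarith : (0:ℝ) ≤ c*(c+1))]
    have step2 : 2/(Real.pi*c) ≤ (1+ε)*(2/(Real.pi*c)) :=
      le_mul_of_one_le_left (by positivity) (by linarith)
    linarith
  have hnum' : (c-1)/(2*(c-2)^2) ≤ (1 + ε) * (2 / (Real.pi * c)) := by
    have h2 : (0:ℝ) < 2*(c-2)^2 := by nlinarith
    have : (c-1)/(2*(c-2)^2) ≤ (c+1)/(2*(c-2)^2) := by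
      rw [div_le_div_iff₀ h2 h2]; nlinarith
    linarith
  rw [abs_le]
  constructor
  · -- lower bound : -(bound) ≤ kmrCDF - scCDF
    have h1 : scCDF t - kmrCDF d t = ∫ l in Set.Iic t, (scDensity l - kmrDensity d l) := by
      rw [kmrCDF, scCDF]; exact (integral_sub hIs.restrict hIk.restrict).symm
    have h2 : ∫ l in Set.Iic t, (scDensity l - kmrDensity d l)
        ≤ ∫ l in Set.Iic t, (Set.Ioo (-1:ℝ) 1).indicator (qin' c) l :=
      integral_mono (hIs.restrict.sub hIk.restrict) hIQ.restrict
        (bound_lower d hdr)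
    have h3 : ∫ l in Set.Iic t, (Set.Ioo (-1:ℝ) 1).indicator (qin' c) l
        ≤ ∫ l, (Set.Ioo (-1:ℝ) 1).indicator (qin' c) l :=
      setIntegral_le_integral hIQ (Filter.Eventually.of_forall
        (Set.indicator_nonneg (fun l _ => qin_nonneg hdr l)))
    have h4 : scCDF t - kmrCDF d t ≤ (c+1)/(2*(c-2)^2) := by
      rw [h1]; exact h2.trans (h3.trans_eq hQval)
    linarith
  · have h2 : ∫ l in Set.Iic t, (kmrDensity d l - scDensity l)
        ≤ ∫ l in Set.Iic t, (Set.Ioo (-1:ℝ) 1).indicator (pin' c) l :=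
      integral_mono (hIk.restrict.sub hIs.restrict) hIP.restrict
        (bound_upper d hdr)
    have h3 : ∫ l in Set.Iic t, (Set.Ioo (-1:ℝ) 1).indicator (pin' c) l
        ≤ ∫ l, (Set.Ioo (-1:ℝ) 1).indicator (pin' c) l :=
      setIntegral_le_integral hIP (Filter.Eventually.of_forall
        (Set.indicator_nonneg (fun l _ => pin_nonneg hdr l)))
    have h4 : kmrCDF d t - scCDF t ≤ (c-1)/(2*(c-2)^2) := by
      rw [hsplit]; exact h2.trans (h3.trans_eq hPval)
    linarith

end
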